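/- Let D be a Hamiltonian digraph and C a Hamiltonian cycle of D. If for every vertex v of D there is an even chord of C with head v, then D has a strong 2-partition. -/
import Mathlib


/-!
Common definitions: digraphs as adjacency relations, directed walks and paths,
arc-colourings, proper connection and proper-walk connection numbers,
strong digraphs, bipartite digraphs, Hamiltonian cycles, chords,
circulant digraphs and strong 2-partitions.
-/

namespace PCDigraph

variable {V : Type*}

/-- A directed walk from `u` to `v` in the digraph with adjacency relation `Adj`. -/
inductive DWalk (Adj : V → V → Prop) : V → V → Type _
  | nil {v : V} : DWalk Adj v v
  | cons {u v w : V} (h : Adj u v) (p : DWalk Adj v w) : DWalk Adj u w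

namespace DWalk

variable {Adj : V → V → Prop}

/-- The list of arcs of a directed walk. -/
def arcs : ∀ {u v : V}, DWalk Adj u v → List (V × V)
  | _, _, .nil => []
  | u, _, .cons (v := w) _ p => (u, w) :: p.arcs

/-- The list of vertices visited by a directed walk. -/
def support : ∀ {u v : V}, DWalk Adj u v → List V
  | u, _, .nil => [u]
  | u, _, .cons _ p => u :: p.support

/-- A directed walk is a (directed) path if it visits no vertex twice. -/
def IsPath {u v : V} (p : DWalk Adj u v) : Prop := p.support.Nodup

end DWalk

/-- A directed walk is properly coloured under the arc-colouring `c` if no two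
consecutive arcs of the walk receive the same colour. -/
def ProperlyColoured {Adj : V → V → Prop} (c : V → V → ℕ) {u v : V}
    (p : DWalk Adj u v) : Prop :=
  (p.arcs.map fun e => c e.1 e.2).Chain' (· ≠ ·)

/-- `c` is an arc-colouring using colours in `{1, …, k}` that makes the digraph
properly connected: between every ordered pair of distinct vertices there is a
properly coloured directed path. -/
def IsPCColouring (Adj : V → V → Prop) (k : ℕ) (c : V → V → ℕ) : Prop :=
  (∀ u v : V, Adj u v → c u v ∈ Finset.Icc 1 k) ∧
    ∀ u v : V, u ≠ v → ∃ p : DWalk Adj u v, p.IsPath ∧ ProperlyColoured c p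

/-- `c` is an arc-colouring using colours in `{1, …, k}` that makes the digraph
properly-walk connected: between every ordered pair of distinct vertices there
is a properly coloured directed walk. -/
def IsWCColouring (Adj : V → V → Prop) (k : ℕ) (c : V → V → ℕ) : Prop :=
  (∀ u v : V, Adj u v → c u v ∈ Finset.Icc 1 k) ∧
    ∀ u v : V, u ≠ v → ∃ p : DWalk Adj u v, ProperlyColoured c p

/-- The proper connection number of a digraph. -/
noncomputable def pc (Adj : V → V → Prop) : ℕ :=
  sInf {k : ℕ | ∃ c : V → V → ℕ, IsPCColouring Adj k c}

/-- The proper-walk connection number of a digraph. -/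
noncomputable def wc (Adj : V → V → Prop) : ℕ :=
  sInf {k : ℕ | ∃ c : V → V → ℕ, IsWCColouring Adj k c}

/-- A digraph is strong if for every ordered pair of vertices there is a
directed path from the first to the second. -/
def Strong (Adj : V → V → Prop) : Prop :=
  ∀ u v : V, ∃ p : DWalk Adj u v, p.IsPath

/-- A digraph is bipartite if its vertex set can be partitioned into two sets
such that every arc joins vertices from different sets. -/
def Bipartite (Adj : V → V → Prop) : Prop :=
  ∃ V₁ V₂ : Set V, V₁ ∪ V₂ = Set.univ ∧ Disjoint V₁ V₂ ∧
    ∀ u v : V, Adj u v → (u ∈ V₁ ∧ v ∈ V₂) ∨ (u ∈ V₂ ∧ v ∈ V₁)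

/-- The out-degree of a vertex: the number of arcs with tail at that vertex. -/
noncomputable def outDeg (Adj : V → V → Prop) (v : V) : ℕ := {w | Adj v w}.ncard

/-- The in-degree of a vertex: the number of arcs with head at that vertex. -/
noncomputable def inDeg (Adj : V → V → Prop) (v : V) : ℕ := {w | Adj w v}.ncard

/-- `x` enumerates a Hamiltonian cycle of the digraph: it is a bijective
enumeration of the vertices, consecutive vertices (cyclically) being joined
by an arc. -/
def IsHamCycle [Fintype V] (Adj : V → V → Prop)
    (x : ZMod (Fintype.card V) → V) : Prop :=
  Function.Bijective x ∧ ∀ i : ZMod (Fintype.card V), Adj (x i) (x (i + 1))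

/-- A digraph is Hamiltonian if it has a Hamiltonian cycle. -/
def Hamiltonian [Fintype V] (Adj : V → V → Prop) : Prop :=
  ∃ x : ZMod (Fintype.card V) → V, IsHamCycle Adj x

/-- For a Hamiltonian cycle enumerated by `x`, the arc `x p → x q` is a chord
if it is not an arc of the cycle, i.e. `q ≠ p + 1`. -/
def IsChord [Fintype V] (Adj : V → V → Prop)
    (x : ZMod (Fintype.card V) → V) (p q : ZMod (Fintype.card V)) : Prop :=
  Adj (x p) (x q) ∧ q ≠ p + 1

/-- The length of the chord from `x p` to `x q`: the length of the directed
path from `x p` to `x q` along the cycle. -/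
def chordLength [Fintype V] (p q : ZMod (Fintype.card V)) : ℕ := (q - p).val

/-- The circulant digraph `C_n(S)`, with vertex set `ZMod n` and an arc from
`i` to `j` whenever `j - i ≡ s (mod n)` for some `s ∈ S`. -/
def circulantAdj (n : ℕ) (S : Finset ℕ) : ZMod n → ZMod n → Prop :=
  fun i j => ∃ s ∈ S, j - i = (s : ZMod n)

/-- A strong 2-partition of a digraph: a partition of the vertex set into two
parts such that the spanning bipartite subdigraph induced by the arcs having
one end in each part is strong. -/
def HasStrongTwoPartition (Adj : V → V → Prop) : Prop :=
  ∃ V₁ V₂ : Set V, V₁ ∪ V₂ = Set.univ ∧ Disjoint V₁ V₂ ∧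
    Strong (fun u v => Adj u v ∧ ((u ∈ V₁ ∧ v ∈ V₂) ∨ (u ∈ V₂ ∧ v ∈ V₁)))

end PCDigraph

open PCDigraph


namespace PCDigraph

namespace DWalk

variable {V : Type*} {Adj : V → V → Prop}

def append : ∀ {u v w : V}, DWalk Adj u v → DWalk Adj v w → DWalk Adj u w
  | _, _, _, .nil, q => q
  | _, _, _, .cons h p, q => .cons h (p.append q)

lemma exists_dropUntil : ∀ {v w : V} (p : DWalk Adj v w) (u : V), u ∈ p.support →
    ∃ q : DWalk Adj u w, q.support.Sublist p.support := by
  intro v w p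
  induction p with
  | nil =>
    intro u h
    simp only [support, List.mem_singleton] at h
    subst h
    exact ⟨.nil, List.Sublist.refl _⟩
  | cons h p ih =>
    intro u hu
    simp only [support, List.mem_cons] at hu
    rcases hu with rfl | hu
    · exact ⟨.cons h p, List.Sublist.refl _⟩
    · obtain ⟨q, hq⟩ := ih u hu
      exact ⟨q, hq.trans (List.sublist_cons_self _ _)⟩

lemma exists_isPath' : ∀ {u v : V} (p : DWalk Adj u v),
    ∃ q : DWalk Adj u v, q.IsPath ∧ q.support.Sublist p.support := by
  intro u v p
  induction p with
  | nil => exact ⟨.nil, by simp [IsPath, support], List.Sublist.refl _⟩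
  | @cons a b c h p ih =>
    obtain ⟨q, hq, hsub⟩ := ih
    by_cases hu : a ∈ q.support
    · obtain ⟨q', hq'⟩ := exists_dropUntil q a hu
      exact ⟨q', hq'.nodup hq, hq'.trans (hsub.trans (List.sublist_cons_self _ _))⟩
    · refine ⟨.cons h q, ?_, ?_⟩
      · simpa [IsPath, support] using ⟨hu, hq⟩
      · simpa [support] using hsub.cons₂ a

lemma exists_isPath {u v : V} (p : DWalk Adj u v) :
    ∃ q : DWalk Adj u v, q.IsPath := by
  obtain ⟨q, hq, _⟩ := exists_isPath' p; exact ⟨q, hq⟩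


end DWalk

section ZModAux

variable {n : ℕ} [NeZero n]

lemma zmod_addcast_sub_val {t : ZMod n} {s : ℕ} (hs : s < n) :
    ((t + (s : ZMod n)) - t).val = s := by
  rw [add_sub_cancel_left, ZMod.val_cast_of_lt hs]

lemma zmod_eq_add_cast_val (t a : ZMod n) : a = t + (((a - t).val : ℕ) : ZMod n) := by
  rw [ZMod.natCast_val, ZMod.cast_id]
  ring

lemma zmod_val_cast_sub_cast {s s' : ℕ} (hs : s < n) (hs' : s' < n) :
    ((s : ZMod n) - (s' : ZMod n)).val = if s' ≤ s then s - s' else n + s - s' := by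
  split_ifs with h
  · rw [← Nat.cast_sub h, ZMod.val_cast_of_lt (by omega)]
  · have : ((s : ZMod n) - (s' : ZMod n)) = ((n + s - s' : ℕ) : ZMod n) := by
      push_cast [Nat.cast_sub (by omega : s' ≤ n + s)]
      simp
    rw [this, ZMod.val_cast_of_lt (by omega)]

end ZModAux

/-- The key combinatorial lemma: for any fixed-point-free map `σ` on `ZMod n`,
there is a cut point `t` such that no proper cyclic interval starting at `t`
is `σ`-invariant. -/
lemma exists_good_cut {n : ℕ} (hn : 2 ≤ n) (σ : ZMod n → ZMod n)
    (hne : ∀ i, σ i ≠ i) :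
    ∃ t : ZMod n, ∀ m ≤ n - 2, ¬ (∀ i, (i - t).val ≤ m → (σ i - t).val ≤ m) := by
  haveI : NeZero n := ⟨by omega⟩
  by_contra hcon
  push_neg at hcon
  -- every t is the start of some proper invariant interval
  set Mset : Set ℕ := {m | ∃ a : ZMod n, m ≤ n - 2 ∧ ∀ i, (i - a).val ≤ m → (σ i - a).val ≤ m}
    with hMset
  have hMne : Mset.Nonempty := by
    obtain ⟨m, hm1, hm2⟩ := hcon 0
    exact ⟨m, 0, hm1, hm2⟩
  set m₀ := sInf Mset with hm₀
  obtain ⟨a, hm₀le, hInv⟩ : m₀ ∈ Mset := Nat.sInf_mem hMne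
  have hmin : ∀ m' < m₀, ∀ t : ZMod n, ¬ (m' ≤ n - 2 ∧ ∀ i, (i - t).val ≤ m' → (σ i - t).val ≤ m') := by
    intro m' hm' t ⟨h1, h2⟩
    have hmem : m' ∈ Mset := ⟨t, h1, h2⟩
    have := Nat.sInf_le hmem
    omega
  -- injectivity of the relative coordinate
  have hrelinj : ∀ (t : ZMod n) (i j : ZMod n), (i - t).val = (j - t).val → i = j := by
    intro t i j h
    have := ZMod.val_injective n h
    exact sub_left_injective this
  have hm₀pos : 1 ≤ m₀ := by
    rcases Nat.eq_zero_or_pos m₀ with h | h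
    · exfalso
      have ha := hInv a (by simp [h])
      rw [h, Nat.le_zero] at ha
      exact hne a (hrelinj a _ _ (by simp [ha]))
    · exact h
  -- the descending induction
  have key : ∀ e, e ≤ m₀ - 1 →
      ¬ (∀ i : ZMod n, ((i - a).val ≤ e ∨ (i - a).val = m₀) →
          ((σ i - a).val ≤ e ∨ (σ i - a).val = m₀)) := by
    intro e
    induction e using Nat.strong_induction_on with
    | _ e ih =>
      intro he hKe
      set t : ZMod n := a + ((e + 1 : ℕ) : ZMod n) with ht
      obtain ⟨m', hm'le, hM⟩ := hcon t
      have hm'ge : m₀ ≤ m' := by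
        by_contra hlt
        exact hmin m' (by omega) t ⟨hm'le, hM⟩
      set b : ZMod n := a + ((m₀ : ℕ) : ZMod n) with hb
      -- relative-to-t coordinates: for i = a + s (s < n), (i - t).val = ...
      have hrel_t : ∀ s : ℕ, s < n → ((a + (s : ZMod n)) - t).val =
          if e + 1 ≤ s then s - (e+1) else n + s - (e+1) := by
        intro s hs
        have : (a + (s : ZMod n)) - t = (s : ZMod n) - ((e+1 : ℕ) : ZMod n) := by
          rw [ht]; ring
        rw [this, zmod_val_cast_sub_cast hs (by omega)]
      have hreltb : (b - t).val = m₀ - (e + 1) := by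
        rw [hb, hrel_t m₀ (by omega)]
        split_ifs with h
        · rfl
        · omega
      have hbM : (b - t).val ≤ m' := by omega
      have hσbM := hM b hbM
      -- σ b in K_e
      have hσbK := hKe b (Or.inr (by rw [hb, zmod_addcast_sub_val (by omega)]))
      rcases hσbK with hσb | hσb
      · -- σ b at position s ≤ e : two cases on wrap
        -- write σ b = a + s
        set s := (σ b - a).val with hs
        have hσbeq : σ b = a + (s : ZMod n) := zmod_eq_add_cast_val a (σ b)
        have hsn : s < n := by omega
        have hreltσb : (σ b - t).val = n + s - (e + 1) := by
          rw [hσbeq, hrel_t s hsn]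
          split_ifs with h
          · omega
          · rfl
        by_cases hwrap : e + 1 + m' ≤ n - 1
        · -- no wrap: contradiction,  n + s - (e+1) ≤ m' forces s < 0
          omega
        · -- wrap: K_{f'} with f' = e + 1 + m' - n is invariant; apply ih
          set f' := e + 1 + m' - n with hf'
          have hf'lt : f' < e := by omega
          have hef : 1 ≤ e := by omega
          refine ih f' hf'lt (by omega) ?_
          intro i hi
          -- i ∈ K_{f'} ⊆ K_e so σ i ∈ K_e
          have hiKe : (i - a).val ≤ e ∨ (i - a).val = m₀ := by
            rcases hi with h | h
            · exact Or.inl (by omega)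
            · exact Or.inr h
          have hσiKe := hKe i hiKe
          -- also i ∈ M (interval at t of radius m')
          have hiM : (i - t).val ≤ m' := by
            have hieq : i = a + (((i - a).val : ℕ) : ZMod n) := zmod_eq_add_cast_val a i
            rcases hi with h | h
            · rw [hieq, hrel_t _ (by omega)]
              split_ifs <;> omega
            · rw [hieq, h, hrel_t m₀ (by omega)]
              split_ifs <;> omega
          have hσiM := hM i hiM
          rcases hσiKe with h' | h'
          · -- σ i at position s' ≤ e; and (σ i - t).val ≤ m' gives s' ≤ f'
            left
            set s' := (σ i - a).val with hs'
            have hσieq : σ i = a + ((s' : ℕ) : ZMod n) := zmod_eq_add_cast_val a (σ i)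
            have : (σ i - t).val = n + s' - (e + 1) := by
              rw [hσieq, hrel_t s' (by omega)]
              split_ifs with hh
              · omega
              · rfl
            omega
          · exact Or.inr h'
      · -- σ b = b: contradiction with hne
        exact hne b (hrelinj a _ _ (by rw [hσb, hb, zmod_addcast_sub_val (by omega)]))
  -- apply at e = m₀ - 1: K_{m₀-1} = full interval, invariant by hInv
  refine key (m₀ - 1) le_rfl ?_
  intro i hi
  have h1 : (i - a).val ≤ m₀ := by omega
  have h2 := hInv i h1
  omega


end PCDigraph

open PCDigraph in

theorem aux_strong {V : Type*} (Adj : V → V → Prop) {n : ℕ} (hnpos : 0 < n)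
    (x : ZMod n → V) (hbij : Function.Bijective x)
    (hcyc : ∀ i : ZMod n, Adj (x i) (x (i + 1)))
    (σ : ZMod n → ZMod n) (hσadj : ∀ i, Adj (x (σ i)) (x i))
    (hσne : ∀ i, σ i ≠ i) (hσeven : ∀ i, (i - σ i).val % 2 = 0) :
    HasStrongTwoPartition Adj := by
  classical
  haveI : NeZero n := ⟨by omega⟩
  -- n = 1 is impossible
  rcases (by omega : n = 1 ∨ 2 ≤ n) with hn1 | hn2
  · exfalso
    haveI : Subsingleton (ZMod n) := by rw [hn1]; infer_instance
    exact hσne 0 (Subsingleton.elim _ _)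
  -- choose the cut point t
  obtain ⟨t, hgood⟩ : ∃ t : ZMod n, n % 2 = 0 ∨ (n % 2 = 1 ∧
      ∀ m ≤ n - 2, ¬ (∀ i, (i - t).val ≤ m → (σ i - t).val ≤ m)) := by
    rcases Nat.even_or_odd n with he | ho
    · exact ⟨0, Or.inl (Nat.even_iff.mp he)⟩
    · obtain ⟨t, ht⟩ := exists_good_cut hn2 σ hσne
      exact ⟨t, Or.inr ⟨Nat.odd_iff.mp ho, ht⟩⟩
  -- the partition
  set e : ZMod n ≃ V := Equiv.ofBijective x hbij with he
  set V₁ : Set V := {v : V | ((e.symm v) - t).val % 2 = 0} with hV₁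
  set V₂ : Set V := V₁ᶜ with hV₂
  set Badj : V → V → Prop :=
    fun u v => Adj u v ∧ ((u ∈ V₁ ∧ v ∈ V₂) ∨ (u ∈ V₂ ∧ v ∈ V₁)) with hBadj
  have hmem : ∀ i : ZMod n, x i ∈ V₁ ↔ (i - t).val % 2 = 0 := by
    intro i
    have h2 : e.symm (x i) = i := Equiv.ofBijective_symm_apply_apply x hbij i
    simp only [hV₁, Set.mem_setOf_eq, h2]
  have hmem2 : ∀ i : ZMod n, x i ∈ V₂ ↔ ¬ ((i - t).val % 2 = 0) := by
    intro i
    rw [hV₂, Set.mem_compl_iff, hmem i]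
  -- crossing arcs are in Badj
  have hcross : ∀ i j : ZMod n, Adj (x i) (x j) →
      (i - t).val % 2 ≠ (j - t).val % 2 → Badj (x i) (x j) := by
    intro i j hadj hpar
    refine ⟨hadj, ?_⟩
    rcases Nat.mod_two_eq_zero_or_one ((i - t).val) with h0 | h1
    · exact Or.inl ⟨(hmem i).mpr h0, (hmem2 j).mpr (by omega)⟩
    · exact Or.inr ⟨(hmem2 i).mpr (by omega), (hmem j).mpr (by omega)⟩
  -- basic coordinates
  have hval_lt : ∀ i : ZMod n, (i - t).val ≤ n - 1 := by
    intro i; have := ZMod.val_lt (i - t); omega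
  have hrel_tsub1 : ((t - 1) - t).val = n - 1 := by
    have h1 : (t - 1) - t = ((n - 1 : ℕ) : ZMod n) := by
      push_cast [Nat.cast_sub (by omega : 1 ≤ n)]
      rw [ZMod.natCast_self]
      ring
    rw [h1, ZMod.val_cast_of_lt (by omega)]
  have hrelinj : ∀ (i j : ZMod n), (i - t).val = (j - t).val → i = j := by
    intro i j h
    have := ZMod.val_injective n h
    exact sub_left_injective this
  -- the forward step arc
  have hstep : ∀ i : ZMod n, (i - t).val < n - 1 → Badj (x i) (x (i + 1)) := by
    intro i hi
    have h1 : (i + 1 - t) = (((i - t).val + 1 : ℕ) : ZMod n) := by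
      push_cast
      rw [ZMod.natCast_val, ZMod.cast_id]
      ring
    have h2 : (i + 1 - t).val = (i - t).val + 1 := by
      rw [h1, ZMod.val_cast_of_lt (by omega)]
    exact hcross i (i + 1) (hcyc i) (by omega)
  -- in the even case, also the arc at the cut
  have hstepeven : n % 2 = 0 → Badj (x (t - 1)) (x t) := by
    intro hpar
    have h1 : Adj (x (t - 1)) (x t) := by
      have := hcyc (t - 1)
      simpa using this
    have h2 : (t - t).val = 0 := by simp
    exact hcross (t - 1) t h1 (by rw [hrel_tsub1, h2]; omega)
  -- bounded forward walks
  have hfwd : ∀ (k : ℕ) (i : ZMod n), (i - t).val + k ≤ n - 1 →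
      Nonempty (DWalk Badj (x i) (x (i + (k : ZMod n)))) := by
    intro k
    induction k with
    | zero => intro i _; exact ⟨by simpa using (DWalk.nil : DWalk Badj (x i) (x i))⟩
    | succ k ih =>
      intro i hi
      have harc : Badj (x i) (x (i + 1)) := hstep i (by omega)
      have h2 : (i + 1 - t).val = (i - t).val + 1 := by
        have h1 : (i + 1 - t) = (((i - t).val + 1 : ℕ) : ZMod n) := by
          push_cast
          rw [ZMod.natCast_val, ZMod.cast_id]
          ring
        rw [h1, ZMod.val_cast_of_lt (by omega)]
      obtain ⟨w⟩ := ih (i + 1) (by omega)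
      have h3 : i + 1 + (k : ZMod n) = i + ((k + 1 : ℕ) : ZMod n) := by
        push_cast; ring
      rw [h3] at w
      exact ⟨DWalk.cons harc w⟩
  -- forward reachability
  have hfwd' : ∀ i j : ZMod n, (i - t).val ≤ (j - t).val →
      Nonempty (DWalk Badj (x i) (x j)) := by
    intro i j hij
    have h1 : i + (((j - t).val - (i - t).val : ℕ) : ZMod n) = j := by
      push_cast [Nat.cast_sub hij]
      rw [ZMod.natCast_val, ZMod.natCast_val, ZMod.cast_id, ZMod.cast_id]
      ring
    have h2 := hfwd ((j - t).val - (i - t).val) i (by have := hval_lt j; omega)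
    rw [h1] at h2
    exact h2
  -- the walk across the cut
  have hcut : Nonempty (DWalk Badj (x (t - 1)) (x t)) := by
    rcases hgood with heven | hodd
    · exact ⟨DWalk.cons (hstepeven heven) DWalk.nil⟩
    · -- odd case: reachability argument
      obtain ⟨hnodd, hodd⟩ := hodd
      set R : ZMod n → Prop := fun i => Nonempty (DWalk Badj (x (t - 1)) (x i)) with hR
      have hR1 : R (t - 1) := ⟨DWalk.nil⟩
      have hRfwd : ∀ i j : ZMod n, R i → (i - t).val ≤ (j - t).val → R j := by
        intro i j ⟨w⟩ hij
        obtain ⟨w'⟩ := hfwd' i j hij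
        exact ⟨w.append w'⟩
      have hRσ : ∀ j : ZMod n, R (σ j) → R j := by
        intro j hRσj
        rcases lt_trichotomy ((σ j - t).val) ((j - t).val) with hlt | heq | hgt
        · exact hRfwd (σ j) j hRσj (le_of_lt hlt)
        · exact absurd (hrelinj _ _ heq) (hσne j)
        · -- backward chord crosses the partition
          have hchordval : (j - σ j).val = n + (j - t).val - (σ j - t).val := by
            have h1 : j - σ j = (((j - t).val : ℕ) : ZMod n) - (((σ j - t).val : ℕ) : ZMod n) := by
              rw [ZMod.natCast_val, ZMod.natCast_val, ZMod.cast_id, ZMod.cast_id]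
              ring
            rw [h1, zmod_val_cast_sub_cast (by have := hval_lt j; omega)
              (by have := hval_lt (σ j); omega)]
            split_ifs with h
            · omega
            · rfl
          have hpar : (σ j - t).val % 2 ≠ (j - t).val % 2 := by
            have := hσeven j
            have h2 := hval_lt (σ j)
            omega
          obtain ⟨w⟩ := hRσj
          exact ⟨w.append (DWalk.cons (hcross (σ j) j (hσadj j) hpar) DWalk.nil)⟩
      -- conclude t is reachable
      by_contra htR
      have hRt : ¬ R t := fun h => htR h
      -- the maximal non-reachable coordinate
      obtain ⟨i₀, hi₀mem, hi₀max⟩ := Finset.exists_max_image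
        (Finset.univ.filter (fun i : ZMod n => ¬ R i)) (fun i => (i - t).val)
        ⟨t, by simpa using hRt⟩
      set m := (i₀ - t).val with hm
      have hi₀R : ¬ R i₀ := by simpa using hi₀mem
      have hiff : ∀ i : ZMod n, ¬ R i ↔ (i - t).val ≤ m := by
        intro i
        constructor
        · intro hi
          exact hi₀max i (by simpa using hi)
        · intro hi hRi
          exact hi₀R (hRfwd i i₀ hRi hi)
      have hmn2 : m ≤ n - 2 := by
        have h1 : m ≤ n - 1 := hval_lt i₀
        rcases (by omega : m = n - 1 ∨ m ≤ n - 2) with h | h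
        · exfalso
          have : i₀ = t - 1 := hrelinj i₀ (t - 1) (by rw [hrel_tsub1]; omega)
          rw [this] at hi₀R
          exact hi₀R hR1
        · exact h
      refine hodd m hmn2 ?_
      intro i hi
      have h1 : ¬ R i := (hiff i).mpr hi
      have h2 : ¬ R (σ i) := fun h => h1 (hRσ i h)
      exact (hiff (σ i)).mp h2
  -- assemble strongness
  refine ⟨V₁, V₂, ?_, ?_, ?_⟩
  · rw [hV₂]; exact Set.union_compl_self V₁
  · rw [hV₂]; exact disjoint_compl_right
  · intro u v
    obtain ⟨i, rfl⟩ := hbij.2 u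
    obtain ⟨j, rfl⟩ := hbij.2 v
    obtain ⟨w1⟩ := hfwd' i (t - 1) (by rw [hrel_tsub1]; exact hval_lt i)
    obtain ⟨w2⟩ := hcut
    obtain ⟨w3⟩ := hfwd' t j (by simp)
    obtain ⟨p, hp⟩ := DWalk.exists_isPath ((w1.append w2).append w3)
    exact ⟨p, hp⟩



/-- Let `D` be a Hamiltonian digraph and `C` a Hamiltonian cycle of `D`.
If for every vertex `v` of `D` there is an even chord of `C` with head `v`,
then `D` has a strong 2-partition. -/
theorem strongTwoPartition_of_even_chord_head {V : Type*} [Fintype V]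
    (Adj : V → V → Prop) (hloopless : ∀ v : V, ¬ Adj v v)
    (x : ZMod (Fintype.card V) → V) (hC : IsHamCycle Adj x)
    (hchord : ∀ v : V, ∃ p q : ZMod (Fintype.card V),
      x q = v ∧ IsChord Adj x p q ∧ Even (chordLength (V := V) p q)) :
    HasStrongTwoPartition Adj := by
  classical
  obtain ⟨hbij, hcyc⟩ := hC
  rcases Nat.eq_zero_or_pos (Fintype.card V) with hn0 | hnpos
  · haveI : IsEmpty V := Fintype.card_eq_zero_iff.mp hn0
    exact ⟨∅, ∅, by simp [Set.eq_empty_of_isEmpty (Set.univ : Set V)], by simp,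
      fun u _ => (IsEmpty.false u).elim⟩
  have hσex : ∀ i : ZMod (Fintype.card V), ∃ p : ZMod (Fintype.card V),
      Adj (x p) (x i) ∧ p ≠ i ∧ (i - p).val % 2 = 0 := by
    intro i
    obtain ⟨p, q, hq, ⟨hadj, -⟩, heven⟩ := hchord (x i)
    have hqi : q = i := hbij.1 hq
    subst hqi
    refine ⟨p, hadj, ?_, ?_⟩
    · rintro rfl; exact hloopless _ hadj
    · exact Nat.even_iff.mp heven
  choose σ hσadj hσne hσeven using hσex
  exact aux_strong Adj hnpos x hbij hcyc σ hσadj hσne hσeven
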